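/- For every c > 0, f > 0 and L ≥ 0, the function φ(σ) = (1/8)(fσ)^{3/4} · cosh((1/2)(fσ)^{1/4}) / sinh³((1/2)(fσ)^{1/4}) · exp(−(L/c)((√(fσ)/4)(coth²((1/2)(fσ)^{1/4}) − 2/3) − 1)) satisfies φ(σ) → 1 as σ → 0⁺, and −φ'(0) = f(c + L)/(240c). -/

import Mathlib

open Real Filter

/-- The conditional Laplace transform `E[e^{-σ V} | L(d) = L]` of the rescaled hull volume
given the rescaled perimeter `L`. -/
noncomputable def condVolLaplace (c f L σ : ℝ) : ℝ :=
  (1 / 8) * (f * σ) ^ ((3 : ℝ) / 4) *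
    (Real.cosh ((1 / 2) * (f * σ) ^ ((1 : ℝ) / 4)) /
      Real.sinh ((1 / 2) * (f * σ) ^ ((1 : ℝ) / 4)) ^ 3) *
    Real.exp (-(L / c) *
      ((Real.sqrt (f * σ) / 4) *
          ((Real.cosh ((1 / 2) * (f * σ) ^ ((1 : ℝ) / 4)) /
              Real.sinh ((1 / 2) * (f * σ) ^ ((1 : ℝ) / 4))) ^ 2 - 2 / 3) - 1))

noncomputable def S8 (x : ℝ) : ℝ :=
  1 + x + x^2/2 + x^3/6 + x^4/24 + x^5/120 + x^6/720 + x^7/5040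

lemma abs_exp_sub_S8 (x : ℝ) (hx : |x| ≤ 1) : |Real.exp x - S8 x| ≤ |x|^8 := by
  have h := Real.exp_bound hx (n := 8) (by norm_num)
  have hsum : ∑ i ∈ Finset.range 8, x ^ i / (Nat.factorial i) = S8 x := by
    simp [Finset.sum_range_succ, S8, Nat.factorial]
  rw [hsum] at h
  calc |Real.exp x - S8 x| ≤ |x|^8 * ((Nat.succ 8 : ℝ)/(Nat.factorial 8 * (8:ℕ))) := h
    _ ≤ |x|^8 * 1 := by
        apply mul_le_mul_of_nonneg_left _ (by positivity)
        norm_num [Nat.factorial]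
    _ = |x|^8 := mul_one _

lemma delta_tendsto (a : ℝ) (n : ℕ) (hn : 1 ≤ n) (hn7 : n ≤ 7) :
    Tendsto (fun t : ℝ => (Real.exp (a*t) - S8 (a*t))/t^n) (nhdsWithin 0 (Set.Ioi 0)) (nhds 0) := by
  have hapos : (0:ℝ) < |a| + 1 := by positivity
  apply squeeze_zero_norm' (a := fun t => (|a|+1)^8 * t)
  · have hmem : Set.Ioo (0:ℝ) (min 1 (|a|+1)⁻¹) ∈ nhdsWithin (0:ℝ) (Set.Ioi 0) :=
      Ioo_mem_nhdsGT_of_mem ⟨le_refl 0, by positivity⟩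
    filter_upwards [hmem] with t ht
    obtain ⟨ht0, htm⟩ := ht
    have ht1 : t ≤ 1 := le_of_lt (lt_of_lt_of_le htm (min_le_left _ _))
    have hta : |a * t| ≤ 1 := by
      rw [abs_mul, abs_of_pos ht0]
      calc |a| * t ≤ (|a|+1) * t := by nlinarith [abs_nonneg a]
        _ ≤ (|a|+1) * (|a|+1)⁻¹ := by
            apply mul_le_mul_of_nonneg_left (le_of_lt (lt_of_lt_of_le htm (min_le_right _ _))) (le_of_lt hapos)
        _ = 1 := mul_inv_cancel₀ (ne_of_gt hapos)
    have hb := abs_exp_sub_S8 (a*t) hta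
    have htn : (0:ℝ) < t^n := by positivity
    rw [norm_div, norm_pow, Real.norm_eq_abs, Real.norm_eq_abs, abs_of_pos ht0,
      div_le_iff₀ htn]
    calc |Real.exp (a*t) - S8 (a*t)| ≤ |a*t|^8 := hb
      _ = |a|^8 * t^8 := by rw [abs_mul, mul_pow, abs_of_pos ht0]
      _ ≤ (|a|+1)^8 * t^8 := by
          apply mul_le_mul_of_nonneg_right _ (by positivity)
          exact pow_le_pow_left₀ (abs_nonneg a) (by linarith) 8
      _ ≤ (|a|+1)^8 * (t * t^n) := by
          apply mul_le_mul_of_nonneg_left _ (by positivity)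
          calc t^8 = t^(8 - (n+1)) * t^(n+1) := by
                rw [← pow_add]; congr 1; omega
            _ ≤ 1 * t^(n+1) := by
                apply mul_le_mul_of_nonneg_right _ (by positivity)
                exact pow_le_one₀ (le_of_lt ht0) ht1
            _ = t * t^n := by ring
      _ = (|a|+1)^8 * t * t^n := by ring
  · have : Tendsto (fun t : ℝ => (|a|+1)^8 * t) (nhds 0) (nhds ((|a|+1)^8 * 0)) :=
      (continuous_const.mul continuous_id).tendsto 0
    simpa using this.mono_left nhdsWithin_le_nhds

lemma tendsto_poly_const (k : ℝ) (P : ℝ → ℝ) (hP : Continuous P) :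
    Tendsto (fun t : ℝ => k + t * P t) (nhdsWithin 0 (Set.Ioi 0)) (nhds k) := by
  have : Tendsto (fun t : ℝ => k + t * P t) (nhds 0) (nhds (k + 0 * P 0)) :=
    (continuous_const.add (continuous_id.mul hP)).tendsto 0
  simpa using this.mono_left nhdsWithin_le_nhds

lemma C1 : Tendsto (fun t : ℝ => (t^3 * Real.cosh t - Real.sinh t ^ 3)/t^7)
    (nhdsWithin 0 (Set.Ioi 0)) (nhds (-(1/15))) := by
  have hG : Tendsto (fun t : ℝ =>
      (-(1/15) + t * (t/720))
      + (1/2) * ((Real.exp (1*t) - S8 (1*t))/t^4) + (1/2) * ((Real.exp ((-1)*t) - S8 ((-1)*t))/t^4)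
      - (1/8) * ((Real.exp (3*t) - S8 (3*t))/t^7) + (3/8) * ((Real.exp (1*t) - S8 (1*t))/t^7)
      - (3/8) * ((Real.exp ((-1)*t) - S8 ((-1)*t))/t^7) + (1/8) * ((Real.exp ((-3)*t) - S8 ((-3)*t))/t^7))
      (nhdsWithin 0 (Set.Ioi 0)) (nhds (-(1/15))) := by
    have h1 := (delta_tendsto 1 4 (by norm_num) (by norm_num)).const_mul (1/2 : ℝ)
    have h2 := (delta_tendsto (-1) 4 (by norm_num) (by norm_num)).const_mul (1/2 : ℝ)
    have h3 := (delta_tendsto 3 7 (by norm_num) (by norm_num)).const_mul (1/8 : ℝ)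
    have h4 := (delta_tendsto 1 7 (by norm_num) (by norm_num)).const_mul (3/8 : ℝ)
    have h5 := (delta_tendsto (-1) 7 (by norm_num) (by norm_num)).const_mul (3/8 : ℝ)
    have h6 := (delta_tendsto (-3) 7 (by norm_num) (by norm_num)).const_mul (1/8 : ℝ)
    have h0 := tendsto_poly_const (-(1/15)) (fun t => t/720) (by continuity)
    have := (((((h0.add h1).add h2).sub h3).add h4).sub h5).add h6
    simpa using this
  apply hG.congr'
  filter_upwards [self_mem_nhdsWithin] with t ht
  have ht0 : t ≠ 0 := ne_of_gt ht
  have hu : Real.exp t ≠ 0 := Real.exp_ne_zero t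
  have h3t : Real.exp (3*t) = (Real.exp t)^3 := by
    rw [show (3:ℝ) = ((3:ℕ):ℝ) by norm_num, Real.exp_nat_mul]
  have h3tn : Real.exp ((-3)*t) = ((Real.exp t)⁻¹)^3 := by
    rw [show ((-3):ℝ)*t = -(((3:ℕ):ℝ)*t) by ring, Real.exp_neg, Real.exp_nat_mul, inv_pow]
  have htn : Real.exp (-t) = (Real.exp t)⁻¹ := Real.exp_neg t
  rw [Real.cosh_eq, Real.sinh_eq]
  simp only [one_mul, neg_one_mul, h3t, h3tn, htn]
  simp only [S8]
  field_simp
  ring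

lemma C2 : Tendsto (fun t : ℝ => (t^2 * Real.cosh t^2 - (2*t^2/3+1) * Real.sinh t^2)/t^6)
    (nhdsWithin 0 (Set.Ioi 0)) (nhds (1/15)) := by
  have hG : Tendsto (fun t : ℝ =>
      (1/15 + t * (2*t/135))
      + ((t^2/3 - 1)/4) * ((Real.exp (2*t) - S8 (2*t))/t^6 + (Real.exp ((-2)*t) - S8 ((-2)*t))/t^6))
      (nhdsWithin 0 (Set.Ioi 0)) (nhds (1/15)) := by
    have h1 := delta_tendsto 2 6 (by norm_num) (by norm_num)
    have h2 := delta_tendsto (-2) 6 (by norm_num) (by norm_num)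
    have hpre : Tendsto (fun t : ℝ => (t^2/3 - 1)/4) (nhdsWithin 0 (Set.Ioi 0))
        (nhds ((0^2/3 - 1)/4)) :=
      ((continuous_id.pow 2).div_const 3 |>.sub continuous_const |>.div_const 4).tendsto 0
        |>.mono_left nhdsWithin_le_nhds
    have h0 := tendsto_poly_const (1/15) (fun t => 2*t/135) (by continuity)
    have := h0.add (hpre.mul (h1.add h2))
    simpa using this
  apply hG.congr'
  filter_upwards [self_mem_nhdsWithin] with t ht
  have ht0 : t ≠ 0 := ne_of_gt ht
  have hu : Real.exp t ≠ 0 := Real.exp_ne_zero t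
  have h2t : Real.exp (2*t) = (Real.exp t)^2 := by
    rw [show (2:ℝ) = ((2:ℕ):ℝ) by norm_num, Real.exp_nat_mul]
  have h2tn : Real.exp ((-2)*t) = ((Real.exp t)⁻¹)^2 := by
    rw [show ((-2):ℝ)*t = -(((2:ℕ):ℝ)*t) by ring, Real.exp_neg, Real.exp_nat_mul, inv_pow]
  have htn : Real.exp (-t) = (Real.exp t)⁻¹ := Real.exp_neg t
  rw [Real.cosh_eq, Real.sinh_eq]
  simp only [h2t, h2tn, htn, S8]
  field_simp
  ring

lemma sinh_div_self : Tendsto (fun t : ℝ => Real.sinh t / t) (nhdsWithin 0 (Set.Ioi 0)) (nhds 1) := by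
  have h := (Real.hasDerivAt_sinh 0)
  rw [hasDerivAt_iff_tendsto_slope] at h
  have h' : Tendsto (slope Real.sinh 0) (nhdsWithin 0 (Set.Ioi 0)) (nhds (Real.cosh 0)) := by
    apply h.mono_left
    apply nhdsWithin_mono
    intro x hx
    exact ne_of_gt hx
  simp only [Real.cosh_zero] at h'
  apply h'.congr'
  filter_upwards [self_mem_nhdsWithin] with t ht
  simp [slope_def_field, div_eq_mul_inv]

lemma self_div_sinh : Tendsto (fun t : ℝ => t / Real.sinh t) (nhdsWithin 0 (Set.Ioi 0)) (nhds 1) := by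
  have := (sinh_div_self).inv₀ (by norm_num)
  rw [inv_one] at this
  apply this.congr
  intro t
  rw [← one_div, one_div_div]

noncomputable def eg (x : ℝ) : ℝ := if x = 0 then 1 else (Real.exp x - 1)/x

lemma eg_spec (x : ℝ) : Real.exp x - 1 = x * eg x := by
  unfold eg
  by_cases h : x = 0
  · simp [h]
  · rw [if_neg h]; field_simp

lemma eg_tendsto : Tendsto eg (nhds 0) (nhds 1) := by
  rw [← nhdsNE_sup_pure (0:ℝ), tendsto_sup]
  constructor
  · have h := Real.hasDerivAt_exp 0
    rw [hasDerivAt_iff_tendsto_slope] at h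
    simp only [Real.exp_zero] at h
    apply h.congr'
    filter_upwards [self_mem_nhdsWithin] with x hx
    have hx0 : x ≠ 0 := hx
    simp [slope_def_field, eg, if_neg hx0, div_eq_mul_inv]
  · simpa [eg] using tendsto_pure_nhds eg 0

lemma A1 : Tendsto (fun t : ℝ => (Real.cosh t * (t/Real.sinh t)^3 - 1)/t^4)
    (nhdsWithin 0 (Set.Ioi 0)) (nhds (-(1/15))) := by
  have := C1.mul (self_div_sinh.pow 3)
  rw [show -(1/15) * 1^3 = -(1/15:ℝ) by norm_num] at this
  apply this.congr'
  filter_upwards [self_mem_nhdsWithin] with t ht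
  have ht0 : t ≠ 0 := ne_of_gt ht
  have hs : Real.sinh t ≠ 0 := ne_of_gt (Real.sinh_pos_iff.mpr ht)
  field_simp

lemma D1 : Tendsto (fun t : ℝ => (t^2*(Real.cosh t/Real.sinh t)^2 - 2*t^2/3 - 1)/t^4)
    (nhdsWithin 0 (Set.Ioi 0)) (nhds (1/15)) := by
  have := C2.mul (self_div_sinh.pow 2)
  rw [show (1/15) * 1^2 = (1/15:ℝ) by norm_num] at this
  apply this.congr'
  filter_upwards [self_mem_nhdsWithin] with t ht
  have ht0 : t ≠ 0 := ne_of_gt ht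
  have hs : Real.sinh t ≠ 0 := ne_of_gt (Real.sinh_pos_iff.mpr ht)
  field_simp
  ring

noncomputable def Phi (c L t : ℝ) : ℝ :=
  (Real.cosh t * (t/Real.sinh t)^3) *
    Real.exp (-(L/c) * (t^2*(Real.cosh t/Real.sinh t)^2 - 2*t^2/3 - 1))

lemma tendsto_pow4 : Tendsto (fun t : ℝ => t^4) (nhdsWithin 0 (Set.Ioi 0)) (nhds 0) := by
  have : Tendsto (fun t : ℝ => t^4) (nhds 0) (nhds ((0:ℝ)^4)) := (continuous_id.pow 4).tendsto 0
  simpa using this.mono_left nhdsWithin_le_nhds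

section PhiLimits
variable (c L : ℝ)

lemma B_tendsto_zero :
    Tendsto (fun t : ℝ => -(L/c) * (t^2*(Real.cosh t/Real.sinh t)^2 - 2*t^2/3 - 1))
    (nhdsWithin 0 (Set.Ioi 0)) (nhds 0) := by
  have h := (D1.const_mul (-(L/c))).mul tendsto_pow4
  rw [mul_zero] at h
  apply h.congr'
  filter_upwards [self_mem_nhdsWithin] with t ht
  have ht4 : (t:ℝ)^4 ≠ 0 := pow_ne_zero 4 (ne_of_gt ht)
  show -(L/c) * ((t^2*(Real.cosh t/Real.sinh t)^2 - 2*t^2/3 - 1) / t^4) * t^4 = _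
  rw [mul_assoc, div_mul_cancel₀ _ ht4]

lemma A_tendsto_one :
    Tendsto (fun t : ℝ => Real.cosh t * (t/Real.sinh t)^3) (nhdsWithin 0 (Set.Ioi 0)) (nhds 1) := by
  have h := A1.mul tendsto_pow4
  rw [mul_zero] at h
  have h2 := h.add_const 1
  rw [zero_add] at h2
  apply h2.congr'
  filter_upwards [self_mem_nhdsWithin] with t ht
  have ht4 : (t:ℝ)^4 ≠ 0 := pow_ne_zero 4 (ne_of_gt ht)
  show (Real.cosh t * (t/Real.sinh t)^3 - 1)/t^4 * t^4 + 1 = _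
  rw [div_mul_cancel₀ _ ht4]
  ring

lemma phi_lim1 : Tendsto (Phi c L) (nhdsWithin 0 (Set.Ioi 0)) (nhds 1) := by
  have hE : Tendsto (fun t : ℝ =>
      Real.exp (-(L/c) * (t^2*(Real.cosh t/Real.sinh t)^2 - 2*t^2/3 - 1)))
      (nhdsWithin 0 (Set.Ioi 0)) (nhds 1) := by
    have := (Real.continuous_exp.tendsto 0).comp (B_tendsto_zero c L)
    rw [Real.exp_zero] at this
    exact this
  have := (A_tendsto_one).mul hE
  rw [mul_one] at this
  exact this

lemma phi_lim2 (hc : c ≠ 0) : Tendsto (fun t : ℝ => (Phi c L t - 1)/t^4) (nhdsWithin 0 (Set.Ioi 0))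
    (nhds (-((c+L)/(15*c)))) := by
  have hB : Tendsto (fun t : ℝ =>
      (-(L/c) * (t^2*(Real.cosh t/Real.sinh t)^2 - 2*t^2/3 - 1)) / t^4)
      (nhdsWithin 0 (Set.Ioi 0)) (nhds (-(L/c) * (1/15))) := by
    have := D1.const_mul (-(L/c))
    apply this.congr'
    filter_upwards [self_mem_nhdsWithin] with t ht
    rw [← mul_div_assoc]
  have hB0 := B_tendsto_zero c L
  have hexpB : Tendsto (fun t : ℝ =>
      Real.exp (-(L/c) * (t^2*(Real.cosh t/Real.sinh t)^2 - 2*t^2/3 - 1)))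
      (nhdsWithin 0 (Set.Ioi 0)) (nhds 1) := by
    have := (Real.continuous_exp.tendsto 0).comp hB0
    rw [Real.exp_zero] at this
    exact this
  have hegB : Tendsto (fun t : ℝ =>
      eg (-(L/c) * (t^2*(Real.cosh t/Real.sinh t)^2 - 2*t^2/3 - 1)))
      (nhdsWithin 0 (Set.Ioi 0)) (nhds 1) := eg_tendsto.comp hB0
  have hmain := (A1.mul hexpB).add (hB.mul hegB)
  have hlim : -(1/15) * 1 + -(L/c) * (1/15) * 1 = -((c+L)/(15*c)) := by
    field_simp
    ring
  rw [hlim] at hmain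
  apply hmain.congr'
  filter_upwards [self_mem_nhdsWithin] with t ht
  have ht4 : (t:ℝ)^4 ≠ 0 := pow_ne_zero 4 (ne_of_gt ht)
  set Bt : ℝ := -(L/c) * (t^2*(Real.cosh t/Real.sinh t)^2 - 2*t^2/3 - 1) with hBt
  have hkey : Real.exp Bt - 1 = Bt * eg Bt := eg_spec Bt
  show (Real.cosh t * (t/Real.sinh t)^3 - 1)/t^4 * Real.exp Bt + Bt/t^4 * eg Bt
      = (Phi c L t - 1)/t^4
  have hPhi : Phi c L t = (Real.cosh t * (t/Real.sinh t)^3) * Real.exp Bt := rfl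
  rw [hPhi, div_mul_eq_mul_div, div_mul_eq_mul_div, ← add_div]
  congr 1
  rw [← hkey]
  ring

end PhiLimits

lemma tau_tendsto (f : ℝ) (hf : 0 < f) :
    Tendsto (fun σ : ℝ => (1/2) * (f*σ) ^ ((1:ℝ)/4)) (nhdsWithin 0 (Set.Ioi 0))
      (nhdsWithin 0 (Set.Ioi 0)) := by
  rw [tendsto_nhdsWithin_iff]
  constructor
  · have hmul : Tendsto (fun σ : ℝ => f*σ) (nhdsWithin 0 (Set.Ioi 0)) (nhds 0) := by
      have : Tendsto (fun σ : ℝ => f*σ) (nhds 0) (nhds (f*0)) :=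
        (continuous_const.mul continuous_id).tendsto 0
      simpa using this.mono_left nhdsWithin_le_nhds
    have hrpow : ContinuousAt (fun y : ℝ => y ^ ((1:ℝ)/4)) 0 :=
      Real.continuousAt_rpow_const 0 ((1:ℝ)/4) (Or.inr (by norm_num))
    have hcomp := (hrpow.tendsto.comp hmul).const_mul (1/2 : ℝ)
    have h0 : ((0:ℝ) ^ ((1:ℝ)/4)) = 0 := Real.zero_rpow (by norm_num)
    rw [h0, mul_zero] at hcomp
    exact hcomp
  · filter_upwards [self_mem_nhdsWithin] with σ hσ
    have : (0:ℝ) < f * σ := mul_pos hf hσ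
    have := Real.rpow_pos_of_pos this ((1:ℝ)/4)
    exact mul_pos (by norm_num) this

lemma cond_eq (c f L σ : ℝ) (hf : 0 < f) (hσ : 0 < σ) :
    condVolLaplace c f L σ = Phi c L ((1/2) * (f*σ) ^ ((1:ℝ)/4)) ∧
    σ = 16 * ((1/2) * (f*σ) ^ ((1:ℝ)/4))^4 / f := by
  have hx : (0:ℝ) < f * σ := mul_pos hf hσ
  set t : ℝ := (1/2) * (f*σ) ^ ((1:ℝ)/4) with hts
  have h14 : (f*σ) ^ ((1:ℝ)/4) = 2*t := by rw [hts]; ring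
  have key0 : ((f*σ) ^ ((1:ℝ)/4))^(3:ℕ) = (f*σ) ^ ((3:ℝ)/4) := by
    rw [← Real.rpow_natCast ((f*σ) ^ ((1:ℝ)/4)) 3, ← Real.rpow_mul hx.le]
    norm_num
  have key1 : (f*σ) ^ ((3:ℝ)/4) = 8*t^3 := by rw [← key0, h14]; ring
  have key2 : Real.sqrt (f*σ) = 4*t^2 := by
    rw [Real.sqrt_eq_rpow]
    have : ((f*σ) ^ ((1:ℝ)/4))^(2:ℕ) = (f*σ) ^ ((1:ℝ)/2) := by
      rw [← Real.rpow_natCast ((f*σ) ^ ((1:ℝ)/4)) 2, ← Real.rpow_mul hx.le]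
      norm_num
    rw [← this, h14]; ring
  have key3 : σ = 16*t^4/f := by
    have : ((f*σ) ^ ((1:ℝ)/4))^(4:ℕ) = (f*σ) ^ ((1:ℝ)) := by
      rw [← Real.rpow_natCast ((f*σ) ^ ((1:ℝ)/4)) 4, ← Real.rpow_mul hx.le]
      norm_num
    rw [Real.rpow_one, h14] at this
    field_simp
    nlinarith [this]
  refine ⟨?_, key3⟩
  unfold condVolLaplace Phi
  rw [← hts, key1, key2]
  have harg : Real.sqrt (f*σ) / 4 = t^2 := by rw [key2]; ring
  rw [show -(L / c) * (4*t^2 / 4 * ((Real.cosh t / Real.sinh t) ^ 2 - 2 / 3) - 1)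
      = -(L/c) * (t^2*(Real.cosh t/Real.sinh t)^2 - 2*t^2/3 - 1) by ring]
  rw [div_eq_mul_inv, div_eq_mul_inv]
  ring

theorem condVolLaplace_limit_and_derivative (c f L : ℝ) (hc : 0 < c) (hf : 0 < f)
    (hL : 0 ≤ L) :
    Tendsto (fun σ : ℝ => condVolLaplace c f L σ) (nhdsWithin 0 (Set.Ioi 0)) (nhds 1) ∧
    Tendsto (fun σ : ℝ => (condVolLaplace c f L σ - 1) / σ) (nhdsWithin 0 (Set.Ioi 0))
      (nhds (-(f * (c + L) / (240 * c)))) := by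
  have hτ := tau_tendsto f hf
  constructor
  · have h := (phi_lim1 c L).comp hτ
    apply h.congr'
    filter_upwards [self_mem_nhdsWithin] with σ hσ
    exact ((cond_eq c f L σ hf hσ).1).symm
  · have h := ((phi_lim2 c L hc.ne').const_mul (f/16 : ℝ)).comp hτ
    have hval : (f/16 : ℝ) * -((c+L)/(15*c)) = -(f * (c + L) / (240 * c)) := by
      field_simp
      ring
    rw [hval] at h
    apply h.congr'
    filter_upwards [self_mem_nhdsWithin] with σ hσ
    obtain ⟨h1, h2⟩ := cond_eq c f L σ hf hσ
    set t : ℝ := (1/2) * (f*σ) ^ ((1:ℝ)/4) with hts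
    have ht : 0 < t := mul_pos (by norm_num) (Real.rpow_pos_of_pos (mul_pos hf hσ) _)
    show (f/16 : ℝ) * ((Phi c L t - 1)/t^4) = (condVolLaplace c f L σ - 1) / σ
    rw [h1, h2]
    field_simp
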